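/- Let f, g : ℝⁿ → ℝ be homogeneous polynomials of degree k ≥ 1 with no common zero except 0, having at most one line through the origin contained in {(f(x), g(x)) : x ∈ ℝⁿ}. If f is copositive with g and there exists z ∈ ℝⁿ with f(z) < 0, then there exists ξ > 0 such that f(x) − ξ·g(x) ≥ 0 for all x ∈ ℝⁿ. -/

import Mathlib

open MvPolynomial in
lemma hs_eval_smul {n k : ℕ} (p : MvPolynomial (Fin n) ℝ) (hp : p.IsHomogeneous k)
    (c : ℝ) (x : Fin n → ℝ) :
    MvPolynomial.eval (c • x) p = c ^ k * MvPolynomial.eval x p := by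
  rw [MvPolynomial.eval_eq, MvPolynomial.eval_eq, Finset.mul_sum]
  apply Finset.sum_congr rfl
  intro d hd
  have hdeg : d.degree = k := by
    by_contra h
    exact (MvPolynomial.mem_support_iff.mp hd) (hp.coeff_eq_zero h)
  have hprod : (∏ i ∈ d.support, (c • x) i ^ d i)
      = c ^ k * ∏ i ∈ d.support, x i ^ d i := by
    simp only [Pi.smul_apply, smul_eq_mul, mul_pow]
    rw [Finset.prod_mul_distrib, Finset.prod_pow_eq_pow_sum]
    rw [show ∑ i ∈ d.support, d i = k from hdeg ▸ rfl]
  rw [hprod]; ring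

lemma hs_ivt_one (G H : ℝ → ℝ) (hG : Continuous G) (hH : Continuous H)
    (hG0 : 0 < G 0) (hG1 : G 1 < 0) (hH0 : H 0 < 0)
    (hmid : ∀ t, G t = 0 → 0 < H t) :
    ∃ t, H t = 0 ∧ 0 < G t := by
  set S := Set.Icc (0:ℝ) 1 ∩ {t | G t ≤ 0} with hS
  have hSne : (1:ℝ) ∈ S := ⟨⟨zero_le_one, le_refl 1⟩, hG1.le⟩
  have hSbdd : BddBelow S := ⟨0, fun t ht => ht.1.1⟩
  have hSclosed : IsClosed S :=
    isClosed_Icc.inter (isClosed_le hG continuous_const)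
  set t₀ := sInf S with ht₀
  have ht₀S : t₀ ∈ S := hSclosed.csInf_mem ⟨1, hSne⟩ hSbdd
  have ht₀pos : 0 < t₀ := by
    rcases lt_or_eq_of_le ht₀S.1.1 with h | h
    · exact h
    · exfalso; rw [← h] at ht₀S; exact absurd ht₀S.2 (not_le.mpr hG0)
  have hpre : ∀ t, 0 ≤ t → t < t₀ → 0 < G t := by
    intro t h0 h1
    by_contra h
    have : t ∈ S := ⟨⟨h0, h1.le.trans ht₀S.1.2⟩, not_lt.mp h⟩
    exact absurd (csInf_le hSbdd this) (not_le.mpr h1)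
  have hGt₀ : G t₀ = 0 := by
    refine le_antisymm ht₀S.2 ?_
    have htend : Filter.Tendsto G (nhdsWithin t₀ (Set.Iio t₀)) (nhds (G t₀)) :=
      (hG.tendsto t₀).mono_left nhdsWithin_le_nhds
    refine ge_of_tendsto htend ?_
    filter_upwards [Ioo_mem_nhdsLT_of_mem ⟨ht₀pos, le_refl t₀⟩] with t ht
    exact (hpre t ht.1.le ht.2).le
  have hHt₀ : 0 < H t₀ := hmid t₀ hGt₀
  have := intermediate_value_Ioo ht₀pos.le hH.continuousOn
    (show (0:ℝ) ∈ Set.Ioo (H 0) (H t₀) from ⟨hH0, hHt₀⟩)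
  obtain ⟨t₁, ht₁, hHt₁⟩ := this
  exact ⟨t₁, hHt₁, hpre t₁ ht₁.1.le ht₁.2⟩

lemma hs_pow_root {k : ℕ} (hk : k ≠ 0) {c : ℝ} (hc : 0 < c) :
    ∃ l : ℝ, 0 < l ∧ l ^ k = c := by
  refine ⟨c ^ ((k:ℝ)⁻¹), Real.rpow_pos_of_pos hc _, ?_⟩
  rw [← Real.rpow_natCast (c ^ ((k:ℝ)⁻¹)) k, ← Real.rpow_mul hc.le]
  rw [inv_mul_cancel₀ (by exact_mod_cast hk), Real.rpow_one]

theorem hs_lemma_strict (n : ℕ) (k : ℕ) (hk : 1 ≤ k)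
    (p q : MvPolynomial (Fin n) ℝ)
    (hp : p.IsHomogeneous k) (hq : q.IsHomogeneous k)
    (f g : (Fin n → ℝ) → ℝ)
    (hf : ∀ x, f x = MvPolynomial.eval x p)
    (hg : ∀ x, g x = MvPolynomial.eval x q)
    (hzero : ∀ x : Fin n → ℝ, f x = 0 → g x = 0 → x = 0)
    (hline : ∀ a b a' b' : ℝ,
      (a ^ 2 + b ^ 2 = 1 ∧ (∃ x, f x = a ∧ g x = b) ∧
        (∃ x, f x = -a ∧ g x = -b)) →
      (a' ^ 2 + b' ^ 2 = 1 ∧ (∃ x, f x = a' ∧ g x = b') ∧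
        (∃ x, f x = -a' ∧ g x = -b')) →
      (a = a' ∧ b = b') ∨ (a = -a' ∧ b = -b'))
    (hcop : ∀ x : Fin n → ℝ, g x ≥ 0 → f x ≥ 0)
    (hneg : ∃ z : Fin n → ℝ, f z < 0) :
    ∃ ξ : ℝ, 0 < ξ ∧ ∀ x : Fin n → ℝ, f x - ξ * g x ≥ 0 := by
  classical
  obtain ⟨z, hz⟩ := hneg
  have cf : Continuous f := by
    rw [show f = fun x => MvPolynomial.eval x p from funext hf]
    exact MvPolynomial.continuous_eval p
  have cg : Continuous g := by
    rw [show g = fun x => MvPolynomial.eval x q from funext hg]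
    exact MvPolynomial.continuous_eval q
  have sf : ∀ (c : ℝ) (x : Fin n → ℝ), f (c • x) = c ^ k * f x := by
    intro c x; rw [hf, hf]; exact hs_eval_smul p hp c x
  have sg : ∀ (c : ℝ) (x : Fin n → ℝ), g (c • x) = c ^ k * g x := by
    intro c x; rw [hg, hg]; exact hs_eval_smul q hq c x
  have hk0 : k ≠ 0 := by omega
  have f0 : f 0 = 0 := by
    have h := sf 0 0; rw [smul_zero] at h
    rw [h, zero_pow hk0, zero_mul]
  have g0 : g 0 = 0 := by
    have h := sg 0 0; rw [smul_zero] at h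
    rw [h, zero_pow hk0, zero_mul]
  have hgz : g z < 0 := by
    by_contra h
    exact absurd (hcop z (not_lt.mp h)) (not_le.mpr hz)
  rcases Nat.eq_zero_or_pos n with hn0 | hn1
  · exfalso
    subst hn0
    have hz0 : z = 0 := funext fun i => i.elim0
    rw [hz0, f0] at hz
    exact lt_irrefl 0 hz
  rcases eq_or_lt_of_le (show 1 ≤ n from hn1) with hn1' | hn2
  · -- n = 1
    subst hn1'
    have key : ∀ x : Fin 1 → ℝ, x = x 0 • (fun _ => (1:ℝ)) := by
      intro x; funext i
      have hi : i = 0 := Subsingleton.elim i 0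
      subst hi; simp
    have hfx : ∀ x : Fin 1 → ℝ, f x = (x 0) ^ k * f (fun _ => (1:ℝ)) := by
      intro x
      have h := sf (x 0) (fun _ => (1:ℝ))
      rw [← key x] at h; exact h
    have hgx : ∀ x : Fin 1 → ℝ, g x = (x 0) ^ k * g (fun _ => (1:ℝ)) := by
      intro x
      have h := sg (x 0) (fun _ => (1:ℝ))
      rw [← key x] at h; exact h
    set A := f (fun _ => (1:ℝ)) with hA
    set B := g (fun _ => (1:ℝ)) with hB
    have hBne : B ≠ 0 := by
      intro hB0
      have hgall : g z = 0 := by rw [hgx z, hB0, mul_zero]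
      exact absurd (hcop z (ge_of_eq hgall)) (not_le.mpr hz)
    have hcA : (z 0) ^ k * A < 0 := by rw [← hfx]; exact hz
    have hcB : (z 0) ^ k * B < 0 := by rw [← hgx]; exact hgz
    have hAB : 0 < A * B := by
      nlinarith [mul_pos_of_neg_of_neg hcA hcB, sq_nonneg (z 0 ^ k)]
    refine ⟨A / B, div_pos_iff.mpr (mul_pos_iff.mp hAB), ?_⟩
    intro x
    rw [hfx x, hgx x, ge_iff_le]
    have hzero' : (x 0) ^ k * A - A / B * ((x 0) ^ k * B) = 0 := by
      field_simp
      ring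
    linarith
  · -- 2 ≤ n
    have hzne : z ≠ 0 := fun h => by rw [h, f0] at hz; exact lt_irrefl 0 hz
    have sphere_scale : ∀ x : Fin n → ℝ, x ≠ 0 →
        ∃ y c, ‖y‖ = 1 ∧ 0 < c ∧ f y = c * f x ∧ g y = c * g x := by
      intro x hx
      have hnx : 0 < ‖x‖ := norm_pos_iff.mpr hx
      refine ⟨‖x‖⁻¹ • x, (‖x‖⁻¹) ^ k, ?_, ?_, sf _ x, sg _ x⟩
      · exact norm_smul_inv_norm (𝕜 := ℝ) hx
      · positivity
    set Sph := Metric.sphere (0 : Fin n → ℝ) 1 with hSph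
    have hmem : ∀ y : Fin n → ℝ, ‖y‖ = 1 → y ∈ Sph := by
      intro y hy; rw [hSph, mem_sphere_zero_iff_norm]; exact hy
    have hSphC : IsCompact Sph := isCompact_sphere 0 1
    have hSphne : Sph.Nonempty := by
      obtain ⟨y, c, hy, _, _, _⟩ := sphere_scale z hzne
      exact ⟨y, hmem y hy⟩
    obtain ⟨amin, hamin, hminle'⟩ := hSphC.exists_isMinOn hSphne cf.continuousOn
    have hminle : ∀ x ∈ Sph, f amin ≤ f x := fun x hx => hminle' hx
    set C := max 1 (-(f amin)) with hCdef
    have hCpos : (0:ℝ) < C := lt_of_lt_of_le one_pos (le_max_left _ _)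
    have hCf : ∀ x ∈ Sph, -C ≤ f x := by
      intro x hx
      have h1 := hminle x hx
      have h2 : -(f amin) ≤ C := le_max_right _ _
      linarith
    have claimA : ∃ M0 : ℝ, 0 < M0 ∧ ∀ ξ, M0 ≤ ξ → ∀ x, g x < 0 → ¬ (f x < ξ * g x) := by
      set Z := Sph ∩ ({x | g x ≤ 0} ∩ {x | f x ≤ 0}) with hZ
      have build : ∀ ξ, 1 ≤ ξ → ∀ x, g x < 0 → f x < ξ * g x →
          ∃ y ∈ Z, g y < 0 ∧ f y < ξ * g y := by
        intro ξ hξ1 x hgx hflt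
        have hξpos : (0:ℝ) < ξ := lt_of_lt_of_le one_pos hξ1
        have hxne : x ≠ 0 := fun h => by rw [h, g0] at hgx; exact lt_irrefl _ hgx
        obtain ⟨y, c, hy1, hcpos, hfy, hgy⟩ := sphere_scale x hxne
        have hgy0 : g y < 0 := by rw [hgy]; exact mul_neg_of_pos_of_neg hcpos hgx
        have hfy0 : f y < ξ * g y := by
          rw [hfy, hgy]
          calc c * f x < c * (ξ * g x) := by
                exact mul_lt_mul_of_pos_left hflt hcpos
            _ = ξ * (c * g x) := by ring
        have hfyneg : f y < 0 := lt_trans hfy0 (by nlinarith)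
        exact ⟨y, ⟨hmem y hy1, hgy0.le, hfyneg.le⟩, hgy0, hfy0⟩
      by_cases hZne : Z.Nonempty
      · have hZcomp : IsCompact Z :=
          hSphC.inter_right ((isClosed_le cg continuous_const).inter
            (isClosed_le cf continuous_const))
        obtain ⟨b, hbZ, hbmax'⟩ := hZcomp.exists_isMaxOn hZne cg.continuousOn
        have hbmax : ∀ y ∈ Z, g y ≤ g b := fun y hy => hbmax' hy
        have hgb : g b < 0 := by
          have hgb0 : g b ≤ 0 := hbZ.2.1
          have hfb0 : f b ≤ 0 := hbZ.2.2
          rcases lt_or_eq_of_le hgb0 with h | h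
          · exact h
          · exfalso
            have hfb : f b = 0 := le_antisymm hfb0 (hcop b h.ge)
            have hb0 : b = 0 := hzero b hfb h
            have : ‖b‖ = 1 := mem_sphere_zero_iff_norm.mp hbZ.1
            rw [hb0, norm_zero] at this; norm_num at this
        set δ := -(g b) with hδdef
        have hδ : 0 < δ := by rw [hδdef]; linarith
        refine ⟨max 1 (C / δ), lt_of_lt_of_le one_pos (le_max_left _ _), ?_⟩
        intro ξ hξ x hgx hflt
        have hξ1 : (1:ℝ) ≤ ξ := le_trans (le_max_left _ _) hξ
        have hξpos : (0:ℝ) < ξ := lt_of_lt_of_le one_pos hξ1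
        obtain ⟨y, hyZ, hgy0, hfy0⟩ := build ξ hξ1 x hgx hflt
        have h1 : g y ≤ -δ := by
          have := hbmax y hyZ; rw [hδdef]; linarith
        have h2 : -C ≤ f y := hCf y hyZ.1
        have hlt : ξ * δ < C := by nlinarith
        have hltd : ξ < C / δ := (lt_div_iff₀ hδ).mpr hlt
        have : ξ < ξ := lt_of_lt_of_le hltd (le_trans (le_max_right 1 (C/δ)) hξ)
        exact lt_irrefl _ this
      · refine ⟨1, one_pos, ?_⟩
        intro ξ hξ x hgx hflt
        obtain ⟨y, hyZ, _, _⟩ := build ξ hξ x hgx hflt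
        exact hZne ⟨y, hyZ⟩
    obtain ⟨M0, hM0pos, hM0⟩ := claimA
    by_contra hcon
    push_neg at hcon
    set T2 := {ξ : ℝ | 0 < ξ ∧ ∃ x, g x < 0 ∧ f x < ξ * g x} with hT2
    have hT2ne : T2.Nonempty := by
      refine ⟨f z / (2 * g z), ?_, z, hgz, ?_⟩
      · apply div_pos_iff.mpr; right; constructor <;> linarith
      · have hgzne : g z ≠ 0 := ne_of_lt hgz
        have hcalc : f z / (2 * g z) * g z = f z / 2 := by
          field_simp
        rw [hcalc]; linarith
    have hT2bdd : BddAbove T2 := by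
      refine ⟨M0, fun ξ hξ => ?_⟩
      by_contra h
      push_neg at h
      obtain ⟨x, hgx, hfx⟩ := hξ.2
      exact hM0 ξ h.le x hgx hfx
    set M₂ := sSup T2 with hM₂
    have hM₂pos : 0 < M₂ := by
      obtain ⟨ξ₁, hξ₁⟩ := hT2ne
      exact lt_of_lt_of_le hξ₁.1 (le_csSup hT2bdd hξ₁)
    obtain ⟨x₀, hx₀⟩ := hcon M₂ hM₂pos
    have hfx₀ : f x₀ < M₂ * g x₀ := by linarith
    rcases lt_trichotomy (g x₀) 0 with hg0 | hg0 | hg0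
    · have hratio : M₂ < f x₀ / g x₀ := (lt_div_iff_of_neg hg0).mpr hfx₀
      set t := (M₂ + f x₀ / g x₀) / 2 with htdef
      have ht1 : M₂ < t := by rw [htdef]; linarith
      have ht2 : t < f x₀ / g x₀ := by rw [htdef]; linarith
      have htT2 : t ∈ T2 :=
        ⟨lt_trans hM₂pos ht1, x₀, hg0, (lt_div_iff_of_neg hg0).mp ht2⟩
      have := le_csSup hT2bdd htT2
      linarith
    · have hfge : f x₀ ≥ 0 := hcop x₀ (ge_of_eq hg0)
      rw [hg0, mul_zero] at hfx₀; linarith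
    · have hfx₀nn : 0 ≤ f x₀ := hcop x₀ hg0.le
      set ρ := f x₀ / g x₀ with hρ
      have hρ0 : 0 ≤ ρ := div_nonneg hfx₀nn hg0.le
      have hρM : ρ < M₂ := (div_lt_iff₀ hg0).mpr hfx₀
      have KEY : ∀ s, ρ < s → s < M₂ →
          ∃ a b : ℝ, a ^ 2 + b ^ 2 = 1 ∧ 0 < b ∧ a = s * b ∧
            (∃ x, f x = a ∧ g x = b) ∧ (∃ x, f x = -a ∧ g x = -b) := by
        intro s hs1 hs2
        have hspos : 0 < s := lt_of_le_of_lt hρ0 hs1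
        have hx₁ : f x₀ < s * g x₀ := by
          have := (div_lt_iff₀ hg0).mp hs1
          linarith
        obtain ⟨t', ht'T2, hst'⟩ := exists_lt_of_lt_csSup hT2ne hs2
        obtain ⟨x₂, hgx₂, hfx₂'⟩ := ht'T2.2
        have hfx₂ : f x₂ < s * g x₂ :=
          lt_trans hfx₂' (mul_lt_mul_of_neg_right hst' hgx₂)
        have hx₀ne : x₀ ≠ 0 := fun h => by rw [h, g0] at hg0; exact lt_irrefl _ hg0
        have hx₂ne : x₂ ≠ 0 := fun h => by rw [h, g0] at hgx₂; exact lt_irrefl _ hgx₂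
        have hrank : 1 < Module.rank ℝ (Fin n → ℝ) := by
          rw [rank_fin_fun]
          exact_mod_cast hn2
        have hpc : IsPathConnected {(0 : Fin n → ℝ)}ᶜ :=
          isPathConnected_compl_singleton_of_one_lt_rank hrank 0
        obtain ⟨γ, hγ⟩ := hpc.joinedIn x₀ (by simpa using hx₀ne) x₂ (by simpa using hx₂ne)
        set F : ℝ → (Fin n → ℝ) := fun t => γ (Set.projIcc (0:ℝ) 1 zero_le_one t) with hF
        have hFcont : Continuous F := γ.continuous.comp continuous_projIcc
        have hF0 : F 0 = x₀ := by
          rw [hF]; simp only [Set.projIcc_left]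
          exact γ.source
        have hF1 : F 1 = x₂ := by
          rw [hF]; simp only [Set.projIcc_right]
          exact γ.target
        have hFne : ∀ t, F t ≠ 0 := by
          intro t
          have := hγ (Set.projIcc (0:ℝ) 1 zero_le_one t)
          simpa using this
        set G : ℝ → ℝ := fun t => g (F t) with hG
        set H : ℝ → ℝ := fun t => f (F t) - s * g (F t) with hH
        have hGc : Continuous G := cg.comp hFcont
        have hHc : Continuous H := (cf.comp hFcont).sub (continuous_const.mul (cg.comp hFcont))
        have hmid : ∀ t, G t = 0 → 0 < H t := by
          intro t hGt
          have hgFt : g (F t) = 0 := hGt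
          have hfF : (0:ℝ) ≤ f (F t) := hcop _ hgFt.ge
          have hfFne : f (F t) ≠ 0 := fun h => hFne t (hzero _ h hgFt)
          have hpos : 0 < f (F t) := lt_of_le_of_ne hfF (Ne.symm hfFne)
          show 0 < f (F t) - s * g (F t)
          rw [hgFt]; linarith
        have hG0 : 0 < G 0 := by show 0 < g (F 0); rw [hF0]; exact hg0
        have hG1 : G 1 < 0 := by show g (F 1) < 0; rw [hF1]; exact hgx₂
        have hH0 : H 0 < 0 := by
          show f (F 0) - s * g (F 0) < 0
          rw [hF0]; linarith
        have hH1 : H 1 < 0 := by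
          show f (F 1) - s * g (F 1) < 0
          rw [hF1]; linarith
        obtain ⟨t₁, hHt₁, hGt₁⟩ := hs_ivt_one G H hGc hHc hG0 hG1 hH0 hmid
        obtain ⟨t₂', hHt₂, hGt₂⟩ := hs_ivt_one (fun t => -G (1 - t)) (fun t => H (1 - t))
          ((hGc.comp (continuous_const.sub continuous_id)).neg)
          (hHc.comp (continuous_const.sub continuous_id))
          (by simp only [sub_zero]; linarith)
          (by simp only [sub_self]; linarith)
          (by simp only [sub_zero]; exact hH1)
          (fun t ht => hmid _ (neg_eq_zero.mp ht))
        set y₁ := F t₁ with hy₁def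
        set y₂ := F (1 - t₂') with hy₂def
        have hgy₁ : 0 < g y₁ := hGt₁
        have hgy₂ : g y₂ < 0 := by
          have : 0 < -G (1 - t₂') := hGt₂
          simpa [hG] using (by linarith : G (1 - t₂') < 0)
        have hfy₁ : f y₁ = s * g y₁ := by
          have : f y₁ - s * g y₁ = 0 := hHt₁
          linarith
        have hfy₂ : f y₂ = s * g y₂ := by
          have : f y₂ - s * g y₂ = 0 := hHt₂
          linarith
        have hs2pos : (0:ℝ) < 1 + s ^ 2 := by positivity
        set b := (Real.sqrt (1 + s ^ 2))⁻¹ with hb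
        have hbpos : 0 < b := inv_pos.mpr (Real.sqrt_pos.mpr hs2pos)
        have hbsq : b ^ 2 = (1 + s ^ 2)⁻¹ := by
          rw [hb, inv_pow, Real.sq_sqrt hs2pos.le]
        refine ⟨s * b, b, ?_, hbpos, rfl, ?_, ?_⟩
        · rw [mul_pow, hbsq]; field_simp; ring
        · obtain ⟨l, hlpos, hlk⟩ := hs_pow_root hk0 (div_pos hbpos hgy₁)
          have hgy₁ne : g y₁ ≠ 0 := ne_of_gt hgy₁
          refine ⟨l • y₁, ?_, ?_⟩
          · rw [sf, hlk, hfy₁]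
            field_simp
          · rw [sg, hlk]
            field_simp
        · obtain ⟨l, hlpos, hlk⟩ := hs_pow_root hk0
            (show 0 < -b / g y₂ from div_pos_of_neg_of_neg (by linarith) hgy₂)
          have hgy₂ne : g y₂ ≠ 0 := ne_of_lt hgy₂
          refine ⟨l • y₂, ?_, ?_⟩
          · rw [sf, hlk, hfy₂]
            field_simp [hgy₂ne]
          · rw [sg, hlk]
            field_simp [hgy₂ne]
      set r := ρ + (M₂ - ρ) / 3 with hr
      set r' := ρ + 2 * (M₂ - ρ) / 3 with hr'
      obtain ⟨a, b, hab, hb, harb, hw1, hw2⟩ := KEY r (by rw [hr]; linarith) (by rw [hr]; linarith)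
      obtain ⟨a', b', hab', hb', harb', hw1', hw2'⟩ :=
        KEY r' (by rw [hr']; linarith) (by rw [hr']; linarith)
      rcases hline a b a' b' ⟨hab, hw1, hw2⟩ ⟨hab', hw1', hw2'⟩ with ⟨hA, hB⟩ | ⟨hA, hB⟩
      · have heq : r * b = r' * b := by
          rw [← harb, hA, harb', hB]
        have hrr : r = r' := mul_right_cancel₀ (ne_of_gt hb) heq
        rw [hr, hr'] at hrr
        linarith
      · linarith
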